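/- Let ζ and ξ be roots of unity in ℂ such that the order of ζξ⁻¹ is neither 1 nor a prime power. Then ζ − ξ is a unit in the ring ℤ[ζ, ξ]. -/

import Mathlib

theorem stmt17 (ζ ξ : ℂ) (m n k : ℕ) (hm : 0 < m) (hn : 0 < n)
    (hζ : IsPrimitiveRoot ζ m) (hξ : IsPrimitiveRoot ξ n)
    (hk : IsPrimitiveRoot (ζ * ξ⁻¹) k) (hk1 : k ≠ 1) (hkp : ¬ IsPrimePow k) :
    IsUnit (⟨ζ - ξ,
      sub_mem (Algebra.subset_adjoin (Set.mem_insert ζ {ξ}))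
        (Algebra.subset_adjoin (Set.mem_insert_of_mem ζ rfl))⟩ :
      Algebra.adjoin ℤ ({ζ, ξ} : Set ℂ)) := by
  set A := Algebra.adjoin ℤ ({ζ, ξ} : Set ℂ)
  have hζA : ζ ∈ A := Algebra.subset_adjoin (Set.mem_insert ζ {ξ})
  have hξA : ξ ∈ A := Algebra.subset_adjoin (Set.mem_insert_of_mem ζ rfl)
  have hξ0 : ξ ≠ 0 := hξ.ne_zero hn.ne'
  -- ξ^(n-1) = ξ⁻¹
  have hξinv : ξ ^ (n - 1) = ξ⁻¹ := by
    rw [eq_comm, inv_eq_iff_eq_inv, eq_comm, inv_eq_of_mul_eq_one_left]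
    rw [← pow_succ', Nat.sub_add_cancel hn]
    exact hξ.pow_eq_one
  set ω : ℂ := ζ * ξ⁻¹ with hω
  have hωA : ω ∈ A := by
    rw [hω, ← hξinv]
    exact mul_mem hζA (pow_mem hξA _)
  set ξ' : A := ⟨ξ, hξA⟩
  set ω' : A := ⟨ω, hωA⟩
  -- k ≠ 0
  have hk0 : k ≠ 0 := by
    intro h
    have : (m * n : ℕ) = 0 := by
      refine Nat.eq_zero_of_zero_dvd ?_
      rw [← h]
      refine hk.dvd_of_pow_eq_one _ ?_
      rw [hω, mul_pow, pow_mul, hζ.pow_eq_one, one_pow, one_mul, inv_pow,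
        mul_comm m n, pow_mul, hξ.pow_eq_one, one_pow, inv_one]
    exact (Nat.mul_pos hm hn).ne' this
  -- ξ' is a unit
  have hξunit : IsUnit ξ' := by
    refine IsUnit.of_mul_eq_one (ξ' ^ (n - 1)) ?_
    ext
    push_cast
    rw [← pow_succ', Nat.sub_add_cancel hn]
    exact hξ.pow_eq_one
  -- 1 - ω' is a unit
  have hcyc1 : Polynomial.eval (1 : A) (Polynomial.cyclotomic k A) = 1 :=
    Polynomial.eval_one_cyclotomic_not_prime_pow (fun hp l hl => hkp (hl ▸ ⟨_, _, hp.prime, Nat.pos_of_ne_zero (by rintro rfl; exact hk1 (hl.symm ▸ rfl)), rfl⟩))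
  have hcycω : Polynomial.eval ω' (Polynomial.cyclotomic k A) = 0 := by
    have : NeZero k := ⟨hk0⟩
    have h2 : Polynomial.eval ω (Polynomial.cyclotomic k ℂ) = 0 :=
      Polynomial.isRoot_cyclotomic_iff.mpr hk
    ext
    have h3 := Polynomial.eval₂_at_apply (p := Polynomial.cyclotomic k A)
      (Subalgebra.val A).toRingHom ω'
    rw [← Polynomial.eval_map, Polynomial.map_cyclotomic] at h3
    simpa [h2, ω'] using h3.symm
  have hsub : IsUnit ((1 : A) - ω') := by
    have := Polynomial.sub_dvd_eval_sub (1 : A) ω' (Polynomial.cyclotomic k A)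
    rw [hcyc1, hcycω, sub_zero] at this
    exact isUnit_of_dvd_one this
  -- conclude
  have key : (⟨ζ - ξ, sub_mem hζA hξA⟩ : A) = ξ' * (-(1 - ω')) := by
    ext
    push_cast
    simp only [ξ', ω', hω]
    field_simp
    ring
  rw [key]
  exact hξunit.mul hsub.neg
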